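/- arXiv:2206.06491 — 2 statements merged into one kernel-verified Lean document; each statement's English description precedes it below -/
import Mathlib

section
/- Let μ be a probability measure, 0 ≤ h ≤ M₀ a measurable function with E_μ[h] = 1, and set γ = Var_μ(h)/4. Then Var_μ((h − γ)₊) ≥ (1/2) Var_μ(h), where (x)₊ = max(x, 0). -/
open MeasureTheory ProbabilityTheory

/-- If `0 ≤ h ≤ M₀` with `E_μ[h] = 1` and `γ = Var_μ(h)/4`, then
`Var_μ((h − γ)₊) ≥ (1/2) Var_μ(h)`. -/
theorem variance_pos_part_ge_half_variance {d : ℕ}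
    (μ : Measure (EuclideanSpace ℝ (Fin d))) [IsProbabilityMeasure μ]
    (h : EuclideanSpace ℝ (Fin d) → ℝ) (M₀ : ℝ)
    (hmeas : Measurable h) (hnonneg : ∀ x, 0 ≤ h x) (hbdd : ∀ x, h x ≤ M₀)
    (hmean : ∫ x, h x ∂μ = 1) :
    variance h μ / 2 ≤
      variance (fun x => max (h x - variance h μ / 4) 0) μ := by
  set γ : ℝ := variance h μ / 4 with hγ
  set g : EuclideanSpace ℝ (Fin d) → ℝ := fun x => max (h x - γ) 0 with hg
  have hgmeas : Measurable g := (hmeas.sub measurable_const).max measurable_const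
  have hgle : ∀ x, g x ≤ h x := fun x => max_le (by linarith [variance_nonneg h μ, hnonneg x])
    (hnonneg x)
  have hgnonneg : ∀ x, 0 ≤ g x := fun x => le_max_right _ _
  have hhL2 : MemLp h 2 μ := MemLp.of_bound hmeas.aestronglyMeasurable M₀
    (Filter.Eventually.of_forall fun x => by
      rw [Real.norm_eq_abs, abs_of_nonneg (hnonneg x)]; exact hbdd x)
  have hgL2 : MemLp g 2 μ := MemLp.of_bound hgmeas.aestronglyMeasurable M₀
    (Filter.Eventually.of_forall fun x => by
      rw [Real.norm_eq_abs, abs_of_nonneg (hgnonneg x)]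
      exact (hgle x).trans (hbdd x))
  have hvarh := variance_eq_sub hhL2
  have hvarg := variance_eq_sub hgL2
  -- integral of g is between 0 and 1
  have hInth : Integrable h μ := hhL2.integrable one_le_two
  have hIntg : Integrable g μ := hgL2.integrable one_le_two
  have hIg0 : 0 ≤ ∫ x, g x ∂μ := integral_nonneg hgnonneg
  have hIg1 : ∫ x, g x ∂μ ≤ 1 := by
    rw [← hmean]; exact integral_mono hIntg hInth hgle
  have hIg2 : (∫ x, g x ∂μ) ^ 2 ≤ 1 := by nlinarith
  -- pointwise: h² − 2γh ≤ g²
  have hpt : ∀ x, h x ^ 2 - 2 * γ * h x ≤ g x ^ 2 := by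
    intro x
    rcases le_or_gt (h x) γ with hc | hc
    · have : g x = 0 := max_eq_right (by linarith)
      rw [this]
      nlinarith [hnonneg x, variance_nonneg h μ]
    · have : g x = h x - γ := max_eq_left (by linarith)
      rw [this]
      nlinarith [variance_nonneg h μ]
  have hIsq : ∫ x, h x ^ 2 ∂μ - 2 * γ ≤ ∫ x, g x ^ 2 ∂μ := by
    have := integral_mono ((hhL2.integrable_sq).sub (hInth.const_mul (2 * γ)))
      hgL2.integrable_sq (fun x => by simpa [mul_comm] using hpt x)
    simp only [Pi.sub_apply] at this
    rw [integral_sub hhL2.integrable_sq (hInth.const_mul (2 * γ)),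
      integral_const_mul, hmean] at this
    simpa using this
  have h2 : variance h μ = ∫ x, h x ^ 2 ∂μ - 1 := by
    rw [hvarh, hmean]; norm_num
  have h3 : variance g μ = ∫ x, g x ^ 2 ∂μ - (∫ x, g x ∂μ) ^ 2 := by
    rw [hvarg]; rfl
  rw [h3]
  have : variance h μ = ∫ x, h x ^ 2 ∂μ - 1 := h2
  linarith [hIsq, hIg2]
end

section
/- Let π_n be a probability density on ℝ^d of the form π_n(θ) ∝ exp(−V_n(√n(θ − θ̂))) and let K ⊂ ℝ^d be compact. Define μ₀ as the Gaussian N_d(θ̂, n⁻¹ Ĩ) conditioned on {θ : √n(θ − θ̂) ∈ K}, where Ĩ is symmetric positive definite. Then μ₀ is M₀-warm with respect to π_n with log M₀ ≤ −log π_n({θ : √n(θ−θ̂) ∈ K}) + sup_{ξ∈K} |ξᵀ(Ĩ⁻¹ − J)ξ| + 2 sup_{ξ∈K} |V_n(ξ) − (1/2)ξᵀJξ|, for any symmetric positive definite matrix J. -/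
open MeasureTheory

/-- Warming parameter control (Lemma on warm starts): for the pseudo-posterior
`π_n(θ) ∝ exp(−V_n(√n(θ−θ̂)))` and the Gaussian `N_d(θ̂, n⁻¹Ĩ)` conditioned on
`S = {θ : √n(θ−θ̂) ∈ K}`, the conditioned Gaussian `μ₀` is `M₀`-warm with
respect to `π_n`, with `log M₀ ≤ −log π_n(S) + sup_{ξ∈K}|ξᵀ(Ĩ⁻¹−J)ξ|
+ 2 sup_{ξ∈K}|V_n(ξ) − (1/2)ξᵀJξ|` for any symmetric positive definite `J`.
The suprema are expressed via arbitrary upper bounds `a`, `b`, and the measures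
via their explicit densities. -/
theorem warming_parameter_control (d n : ℕ) (hn : 0 < n)
    (θh : Fin d → ℝ)
    (Itil J : Matrix (Fin d) (Fin d) ℝ) (hItil : Itil.PosDef) (hJ : J.PosDef)
    (V : (Fin d → ℝ) → ℝ) (hV : Measurable V)
    (K : Set (Fin d → ℝ)) (hK : IsCompact K) (hKm : MeasurableSet K)
    (f g : (Fin d → ℝ) → ℝ)
    (hf : ∀ θ, f θ = Real.exp (-(V (Real.sqrt n • (θ - θh)))))
    (hg : ∀ θ, g θ = Real.exp (-((n : ℝ) / 2 *
      dotProduct (θ - θh) ((Itil⁻¹).mulVec (θ - θh)))))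
    (hfint : Integrable f)
    (S : Set (Fin d → ℝ)) (hS : S = {θ | Real.sqrt n • (θ - θh) ∈ K})
    (hgS : 0 < ∫ θ in S, g θ) (hfS : 0 < ∫ θ in S, f θ)
    (a b : ℝ)
    (ha : ∀ ξ ∈ K, |dotProduct ξ ((Itil⁻¹ - J).mulVec ξ)| ≤ a)
    (hb : ∀ ξ ∈ K, |V ξ - (1 / 2) * dotProduct ξ (J.mulVec ξ)| ≤ b)
    (E : Set (Fin d → ℝ)) (hE : MeasurableSet E) :
    (∫ θ in E ∩ S, g θ) / (∫ θ in S, g θ)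
      ≤ Real.exp (-(Real.log ((∫ θ in S, f θ) / (∫ θ, f θ))) + a + 2 * b) *
        ((∫ θ in E, f θ) / (∫ θ, f θ)) := by

  have hcc : Real.exp (a / 2 + b) > 0 := Real.exp_pos _
  set c : ℝ := a / 2 + b with hc
  have hSm : MeasurableSet S := by
    rw [hS]
    exact hKm.preimage (by fun_prop)
  have hgm : Measurable g := by
    have : g = fun θ => Real.exp (-((n : ℝ) / 2 *
        dotProduct (θ - θh) ((Itil⁻¹).mulVec (θ - θh)))) := funext hg
    rw [this]
    apply Measurable.exp
    apply Measurable.neg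
    apply Measurable.const_mul
    simp only [dotProduct, Matrix.mulVec]
    fun_prop
  have key : ∀ θ ∈ S, g θ ≤ Real.exp c * f θ ∧ f θ ≤ Real.exp c * g θ := by
    intro θ hθ
    have hξK : Real.sqrt n • (θ - θh) ∈ K := by rw [hS] at hθ; exact hθ
    set ξ : Fin d → ℝ := Real.sqrt n • (θ - θh) with hξ
    have hnn : Real.sqrt n * Real.sqrt n = n := Real.mul_self_sqrt (Nat.cast_nonneg n)
    have hq : (n : ℝ) / 2 * dotProduct (θ - θh) ((Itil⁻¹).mulVec (θ - θh))
        = 1 / 2 * dotProduct ξ ((Itil⁻¹).mulVec ξ) := by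
      rw [hξ, Matrix.mulVec_smul, smul_dotProduct, dotProduct_smul,
        smul_eq_mul, smul_eq_mul]
      linear_combination (-(dotProduct (θ - θh) ((Itil⁻¹).mulVec (θ - θh))) / 2) * hnn
    have hPQR : dotProduct ξ ((Itil⁻¹).mulVec ξ)
        = dotProduct ξ (J.mulVec ξ)
          + dotProduct ξ ((Itil⁻¹ - J).mulVec ξ) := by
      rw [Matrix.sub_mulVec, dotProduct_sub]; ring
    have h1 := abs_le.1 (ha ξ hξK)
    have h2 := abs_le.1 (hb ξ hξK)
    constructor
    · rw [hg, hf, hq, ← Real.exp_add]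
      apply Real.exp_le_exp.2
      rw [hc]
      linarith [hPQR, h1.1, h1.2, h2.1, h2.2]
    · rw [hg, hf, hq, ← Real.exp_add]
      apply Real.exp_le_exp.2
      rw [hc]
      linarith [hPQR, h1.1, h1.2, h2.1, h2.2]
  have hfnn : ∀ θ, 0 ≤ f θ := fun θ => by rw [hf]; positivity
  have hgnn : ∀ θ, 0 ≤ g θ := fun θ => by rw [hg]; positivity
  -- integrability of g on S
  have hIg : IntegrableOn g S := by
    apply Integrable.mono ((hfint.const_mul (Real.exp c)).integrableOn)
      hgm.aestronglyMeasurable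
    refine (ae_restrict_iff' hSm).2 (ae_of_all _ fun θ hθ => ?_)
    rw [Real.norm_eq_abs, Real.norm_eq_abs, abs_of_nonneg (hgnn θ),
      abs_of_nonneg (mul_nonneg (Real.exp_pos c).le (hfnn θ))]
    exact (key θ hθ).1
  -- inequality 1: ∫_{E∩S} g ≤ exp c * ∫_{E∩S} f
  have hineq1 : (∫ θ in E ∩ S, g θ) ≤ Real.exp c * ∫ θ in E ∩ S, f θ := by
    rw [← integral_const_mul]
    apply setIntegral_mono_on (hIg.mono_set Set.inter_subset_right)
      ((hfint.const_mul (Real.exp c)).integrableOn) (hE.inter hSm)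
    exact fun θ hθ => (key θ hθ.2).1
  -- inequality 2: ∫_{E∩S} f ≤ ∫_E f
  have hineq2 : (∫ θ in E ∩ S, f θ) ≤ ∫ θ in E, f θ := by
    apply setIntegral_mono_set hfint.integrableOn (ae_of_all _ hfnn)
    exact HasSubset.Subset.eventuallyLE Set.inter_subset_left
  -- inequality 3: ∫_S f ≤ exp c * ∫_S g
  have hineq3 : (∫ θ in S, f θ) ≤ Real.exp c * ∫ θ in S, g θ := by
    rw [← integral_const_mul]
    apply setIntegral_mono_on hfint.integrableOn (hIg.const_mul _) hSm
    exact fun θ hθ => (key θ hθ).2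
  have hT : (0:ℝ) < ∫ θ, f θ :=
    lt_of_lt_of_le hfS (setIntegral_le_integral hfint (ae_of_all _ hfnn))
  have hEf : (0:ℝ) ≤ ∫ θ in E, f θ := integral_nonneg hfnn
  have hrw : Real.exp (-(Real.log ((∫ θ in S, f θ) / (∫ θ, f θ))) + a + 2 * b) *
        ((∫ θ in E, f θ) / (∫ θ, f θ))
      = Real.exp c * Real.exp c * (∫ θ in E, f θ) / (∫ θ in S, f θ) := by
    have harith : -(Real.log ((∫ θ in S, f θ) / (∫ θ, f θ))) + a + 2 * b
        = c + c + -(Real.log ((∫ θ in S, f θ) / (∫ θ, f θ))) := by rw [hc]; ring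
    rw [harith, Real.exp_add, Real.exp_add, Real.exp_neg,
      Real.exp_log (div_pos hfS hT)]
    field_simp
  rw [hrw, div_le_div_iff₀ hgS hfS]
  calc (∫ θ in E ∩ S, g θ) * ∫ θ in S, f θ
      ≤ (Real.exp c * ∫ θ in E, f θ) * (Real.exp c * ∫ θ in S, g θ) := by
        apply mul_le_mul _ hineq3 hfS.le (by positivity)
        exact hineq1.trans (by nlinarith [Real.exp_pos c])
    _ = Real.exp c * Real.exp c * (∫ θ in E, f θ) * ∫ θ in S, g θ := by ring
end
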